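/- arXiv:2405.10795 — 4 statements merged into one kernel-verified Lean document; each statement's English description precedes it below -/
import Mathlib

section
/- Let N ≥ 2 be an integer, θ > 0, σ > 0, α ∈ (0,1), β := 1 − α, β ≠ e^{−θ/N}, and K ≥ 0. Let X_1, …, X_N be square-integrable real random variables with means m*_1, …, m*_N satisfying m*_t − m*_{t−1} = K/N for every t ∈ {2,…,N} (linear drift), with Var(X_t) = σ²/(2θ) and Cov(X_t, X_s) = (σ²/(2θ))·e^{−(θ/N)|t−s|} for all t, s ∈ {1,…,N}. Define m̂_1 := X_1 and m̂_t := (1−α)·m̂_{t−1} + α·X_t for t ∈ {2,…,N}. Then E[(m̂_N − m*_N)²] = β^{2(N−1)}·σ²/(2θ) + (β²·((1+β)/(1−β))·(K²/N²) + α²·(σ²/(2θ))·((e^{θ/N}+β)/(e^{θ/N}−β)))·((1 − β^{2(N−1)})/(1 − β²)) − 2·(K²/N²)·((β^{N+1} − β^{2N})/α²) + α·(σ²/θ)·((e^{θ/N}−1)/(1 − β·e^{−θ/N}))·((β^{2N−1}·e^{−θ/N} − β^{N}·e^{−θ})/(β·e^{θ/N} − 1)), i.e., the upper bound of the main theorem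 holds with equality. -/
open MeasureTheory Real

set_option maxHeartbeats 2000000

noncomputable def Faux (θ σ α β K : ℝ) (N : ℕ) (ρ : ℝ) (n : ℕ) : ℝ :=
  β ^ (2 * n) * σ ^ 2 / (2 * θ)
    + (β ^ 2 * ((1 + β) / (1 - β)) * (K ^ 2 / (N : ℝ) ^ 2)
        + α ^ 2 * (σ ^ 2 / (2 * θ)) * ((1 + β * ρ) / (1 - β * ρ)))
      * ((1 - β ^ (2 * n)) / (1 - β ^ 2))
    - 2 * (K ^ 2 / (N : ℝ) ^ 2) * ((β ^ (n + 2) - β ^ (2 * n + 2)) / α ^ 2)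
    + α * (σ ^ 2 / θ) * ((1 - ρ) / (1 - β * ρ))
      * ((β ^ (2 * n + 1) * ρ - β ^ (n + 1) * ρ ^ (n + 1)) / (β - ρ))

theorem faux_base (θ σ α β K ρ : ℝ) (N : ℕ) :
    Faux θ σ α β K N ρ 0 = σ ^ 2 / (2 * θ) := by
  norm_num [Faux]

theorem faux_step (θ σ α β K ρ : ℝ) (N n : ℕ)
    (hαβ : α = 1 - β)
    (hθ : θ ≠ 0) (hρ : ρ ≠ 0) (hα : α ≠ 0) (h1β : 1 + β ≠ 0) (hN : (N:ℝ) ≠ 0)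
    (hβρ : 1 - β * ρ ≠ 0) (hβρ' : β - ρ ≠ 0) :
    Faux θ σ α β K N ρ (n+1)
      = β^2 * Faux θ σ α β K N ρ n + α^2*(σ^2/(2*θ)) + β^2*(K/(N:ℝ))^2
        + 2*α*β*((σ^2/(2*θ))*ρ*((β*ρ)^n + α*(1-(β*ρ)^n)/(1-β*ρ)))
        - 2*β^2*(K/(N:ℝ))*(-(K/(N:ℝ))*β*(1-β^n)/α) := by
  subst hαβ
  have h1β2 : 1 - β^2 ≠ 0 := by
    have h : 1 - β^2 = (1-β) * (1+β) := by ring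
    rw [h]; exact mul_ne_zero hα h1β
  simp only [Faux]
  field_simp
  ring

theorem faux_final (θ σ α β K E ρ : ℝ) (N n : ℕ)
    (hθ : θ ≠ 0) (hρ : ρ ≠ 0) (hEρ : E * ρ = 1)
    (hβρ : 1 - β * ρ ≠ 0) (hβρ' : β - ρ ≠ 0) :
    Faux θ σ α β K N ρ n
      = β ^ (2 * n) * σ ^ 2 / (2 * θ)
        + (β ^ 2 * ((1 + β) / (1 - β)) * (K ^ 2 / (N : ℝ) ^ 2)
            + α ^ 2 * (σ ^ 2 / (2 * θ)) * ((E + β) / (E - β)))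
          * ((1 - β ^ (2 * n)) / (1 - β ^ 2))
        - 2 * (K ^ 2 / (N : ℝ) ^ 2) * ((β ^ (n + 2) - β ^ (2 * n + 2)) / α ^ 2)
        + α * (σ ^ 2 / θ) * ((E - 1) / (1 - β * ρ))
          * ((β ^ (2 * n + 1) * ρ - β ^ (n + 1) * ρ ^ (n + 1)) / (β * E - 1)) := by
  have hE : E = ρ⁻¹ := eq_inv_of_mul_eq_one_left hEρ
  subst hE
  have hd1 : ρ⁻¹ - β ≠ 0 := by
    have h : (1 - β * ρ) * ρ⁻¹ = ρ⁻¹ - β := by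
      rw [sub_mul, one_mul, mul_assoc, mul_inv_cancel₀ hρ, mul_one]
    rw [← h]; exact mul_ne_zero hβρ (inv_ne_zero hρ)
  have hd2 : β * ρ⁻¹ - 1 ≠ 0 := by
    have h : (β - ρ) * ρ⁻¹ = β * ρ⁻¹ - 1 := by rw [sub_mul, mul_inv_cancel₀ hρ]
    rw [← h]; exact mul_ne_zero hβρ' (inv_ne_zero hρ)
  have e1 : ((1:ℝ) + β * ρ) / (1 - β * ρ) = (ρ⁻¹ + β) / (ρ⁻¹ - β) := by
    rw [div_eq_div_iff hβρ hd1]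
    linear_combination (2*β) * mul_inv_cancel₀ hρ
  have e2 : ∀ c X : ℝ, c * ((1 - ρ) / (1 - β * ρ)) * (X / (β - ρ))
      = c * ((ρ⁻¹ - 1) / (1 - β * ρ)) * (X / (β * ρ⁻¹ - 1)) := by
    intro c X
    have h : (1 - ρ) / (β - ρ) = (ρ⁻¹ - 1) / (β * ρ⁻¹ - 1) := by
      rw [div_eq_div_iff hβρ' hd2]
      linear_combination (1-β) * mul_inv_cancel₀ hρ
    calc c * ((1 - ρ) / (1 - β * ρ)) * (X / (β - ρ))
        = c * (1 - β * ρ)⁻¹ * X * ((1 - ρ) / (β - ρ)) := by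
          rw [div_eq_mul_inv, div_eq_mul_inv, div_eq_mul_inv]; ring
      _ = c * (1 - β * ρ)⁻¹ * X * ((ρ⁻¹ - 1) / (β * ρ⁻¹ - 1)) := by rw [h]
      _ = c * ((ρ⁻¹ - 1) / (1 - β * ρ)) * (X / (β * ρ⁻¹ - 1)) := by
          rw [div_eq_mul_inv, div_eq_mul_inv, div_eq_mul_inv]; ring
  simp only [Faux]
  rw [e1, e2]

lemma integrable_mul_of_memL2 {Ω : Type*} [MeasurableSpace Ω] {μ : Measure Ω}
    {f g : Ω → ℝ} (hf : MemLp f 2 μ) (hg : MemLp g 2 μ) :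
    Integrable (fun ω => f ω * g ω) μ := by
  have h : MemLp (f • g) 1 μ := hg.smul hf (hpqr := ⟨by
    simp [ENNReal.inv_two_add_inv_two]⟩)
  rw [memLp_one_iff_integrable] at h
  exact h


/-- Sharpness of the main theorem: for a linear drift (increments exactly `K/N`)
the upper bound on the mean square error of the exponential smoothing estimator
holds with equality. -/
theorem mse_upper_bound_eq_of_linear_drift
    {Ω : Type*} [MeasurableSpace Ω] (μ : Measure Ω) [IsProbabilityMeasure μ]
    (N : ℕ) (hN : 2 ≤ N) (θ σ α β K : ℝ) (hθ : 0 < θ) (hσ : 0 < σ)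
    (hα : α ∈ Set.Ioo (0 : ℝ) 1) (hβ : β = 1 - α) (hK : 0 ≤ K)
    (hβne : β ≠ Real.exp (-(θ / N)))
    (X : ℕ → Ω → ℝ) (m : ℕ → ℝ)
    (hL2 : ∀ t, 1 ≤ t → t ≤ N → MemLp (X t) 2 μ)
    (hmean : ∀ t, 1 ≤ t → t ≤ N → ∫ ω, X t ω ∂μ = m t)
    (hcov : ∀ t s, 1 ≤ t → t ≤ N → 1 ≤ s → s ≤ N →
      ∫ ω, (X t ω - m t) * (X s ω - m s) ∂μ
        = σ ^ 2 / (2 * θ) * Real.exp (-(θ / N) * |(t : ℝ) - (s : ℝ)|))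
    (hlin : ∀ t, 2 ≤ t → t ≤ N → m t - m (t - 1) = K / N)
    (mhat : ℕ → Ω → ℝ)
    (hm1 : ∀ ω, mhat 1 ω = X 1 ω)
    (hmt : ∀ t, 2 ≤ t → t ≤ N → ∀ ω,
      mhat t ω = (1 - α) * mhat (t - 1) ω + α * X t ω) :
    ∫ ω, (mhat N ω - m N) ^ 2 ∂μ
      = β ^ (2 * (N - 1)) * σ ^ 2 / (2 * θ)
        + (β ^ 2 * ((1 + β) / (1 - β)) * (K ^ 2 / (N : ℝ) ^ 2)
            + α ^ 2 * (σ ^ 2 / (2 * θ))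
              * ((Real.exp (θ / N) + β) / (Real.exp (θ / N) - β)))
          * ((1 - β ^ (2 * (N - 1))) / (1 - β ^ 2))
        - 2 * (K ^ 2 / (N : ℝ) ^ 2) * ((β ^ (N + 1) - β ^ (2 * N)) / α ^ 2)
        + α * (σ ^ 2 / θ)
          * ((Real.exp (θ / N) - 1) / (1 - β * Real.exp (-(θ / N))))
          * ((β ^ (2 * N - 1) * Real.exp (-(θ / N)) - β ^ N * Real.exp (-θ))
              / (β * Real.exp (θ / N) - 1)) := by
  obtain ⟨hα0, hα1⟩ := hα
  set ρ := Real.exp (-(θ / N)) with hρdef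
  have hβ0 : 0 < β := by rw [hβ]; linarith
  have hβ1 : β < 1 := by rw [hβ]; linarith
  have hαβ : α = 1 - β := by rw [hβ]; ring
  have hNR : (0:ℝ) < N := by
    have : (2:ℝ) ≤ N := by exact_mod_cast hN
    linarith
  have hNne : (N:ℝ) ≠ 0 := ne_of_gt hNR
  have hρpos : 0 < ρ := Real.exp_pos _
  have hρne : ρ ≠ 0 := ne_of_gt hρpos
  have hρlt1 : ρ < 1 := by
    rw [hρdef]
    apply Real.exp_lt_one_iff.mpr
    have : 0 < θ / N := div_pos hθ hNR
    linarith
  have hβρ : 1 - β * ρ ≠ 0 := by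
    have : β * ρ < 1 := by nlinarith
    intro h; nlinarith
  have hβmρ : β - ρ ≠ 0 := sub_ne_zero.mpr hβne
  have hα0' : α ≠ 0 := ne_of_gt hα0
  have hθ' : θ ≠ 0 := ne_of_gt hθ
  have h1mβ : (1:ℝ) - β ≠ 0 := hαβ ▸ hα0'
  have h1β : (1:ℝ) + β ≠ 0 := by positivity
  have hEρ : Real.exp (θ / N) * ρ = 1 := by
    rw [hρdef, ← Real.exp_add]; simp
  -- L² facts
  have hYL2 : ∀ t, 1 ≤ t → t ≤ N → MemLp (fun ω => X t ω - m t) 2 μ := by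
    intro t h1 h2
    exact (hL2 t h1 h2).sub (memLp_const _)
  have hmhatL2 : ∀ n : ℕ, n + 1 ≤ N → MemLp (mhat (n+1)) 2 μ := by
    intro n
    induction n with
    | zero =>
      intro h
      have heq : mhat 1 = X 1 := funext hm1
      rw [heq]; exact hL2 1 le_rfl h
    | succ n ih =>
      intro h
      have heq : mhat (n+2) = fun ω => (1 - α) * mhat (n+1) ω + α * X (n+2) ω :=
        funext (hmt (n+2) (by omega) h)
      rw [heq]
      exact ((ih (by omega)).const_mul _).add ((hL2 (n+2) (by omega) h).const_mul _)
  have heL2 : ∀ n : ℕ, n + 1 ≤ N → MemLp (fun ω => mhat (n+1) ω - m (n+1)) 2 μ := by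
    intro n h
    exact (hmhatL2 n h).sub (memLp_const _)
  -- mean zero
  have hYmean : ∀ t, 1 ≤ t → t ≤ N → ∫ ω, (X t ω - m t) ∂μ = 0 := by
    intro t h1 h2
    rw [integral_sub ((hL2 t h1 h2).integrable one_le_two) (integrable_const _),
      hmean t h1 h2, integral_const]
    simp
  -- covariance in ρ-power form
  have hcov2 : ∀ t s, 1 ≤ t → t < s → s ≤ N →
      ∫ ω, (X t ω - m t) * (X s ω - m s) ∂μ = σ ^ 2 / (2 * θ) * ρ ^ (s - t) := by
    intro t s h1 h2 h3
    rw [hcov t s h1 (by omega) (by omega) h3]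
    congr 1
    rw [hρdef, ← Real.exp_nat_mul]
    congr 1
    have hts : (t:ℝ) ≤ s := by exact_mod_cast h2.le
    rw [abs_sub_comm, abs_of_nonneg (by linarith)]
    push_cast [Nat.cast_sub h2.le]
    ring
  have hvar : ∀ t, 1 ≤ t → t ≤ N → ∫ ω, (X t ω - m t) ^ 2 ∂μ = σ ^ 2 / (2 * θ) := by
    intro t h1 h2
    have h := hcov t t h1 h2 h1 h2
    simp only [sub_self, abs_zero, mul_zero, Real.exp_zero, mul_one] at h
    simpa [pow_two] using h
  -- recursion identity
  have hrec : ∀ n : ℕ, n + 2 ≤ N → ∀ ω,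
      mhat (n+2) ω - m (n+2)
        = β * (mhat (n+1) ω - m (n+1)) + α * (X (n+2) ω - m (n+2)) - β * (K / N) := by
    intro n hn ω
    have h1 := hmt (n+2) (by omega) hn ω
    have h2 := hlin (n+2) (by omega) hn
    simp only [show n+2-1 = n+1 from rfl] at h1 h2
    have h3 : m (n+2) = m (n+1) + K / N := by linarith
    rw [h1, h3, hβ]; ring
  -- cross covariance
  have hD : ∀ n : ℕ, ∀ s, n + 1 < s → s ≤ N →
      ∫ ω, (mhat (n+1) ω - m (n+1)) * (X s ω - m s) ∂μ
        = σ ^ 2 / (2 * θ) * ρ ^ (s - (n+1))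
            * ((β*ρ)^n + α*(1-(β*ρ)^n)/(1-β*ρ)) := by
    intro n
    induction n with
    | zero =>
      intro s h1 h2
      simp only [hm1]
      rw [hcov2 1 s le_rfl h1 h2]
      norm_num
    | succ n ih =>
      intro s h1 h2
      have hn2 : n + 2 ≤ N := by omega
      have hpt : ∀ ω, (mhat (n+2) ω - m (n+2)) * (X s ω - m s)
          = β * ((mhat (n+1) ω - m (n+1)) * (X s ω - m s))
            + α * ((X (n+2) ω - m (n+2)) * (X s ω - m s))
            + (-(β * (K / N))) * (X s ω - m s) := by
        intro ω; rw [hrec n hn2 ω]; ring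
      have hsN : 1 ≤ s := by omega
      have j1 : Integrable (fun ω => (mhat (n+1) ω - m (n+1)) * (X s ω - m s)) μ :=
        integrable_mul_of_memL2 (heL2 n (by omega)) (hYL2 s hsN h2)
      have j2 : Integrable (fun ω => (X (n+2) ω - m (n+2)) * (X s ω - m s)) μ :=
        integrable_mul_of_memL2 (hYL2 (n+2) (by omega) hn2) (hYL2 s hsN h2)
      have j3 : Integrable (fun ω => (X s ω - m s)) μ :=
        (hYL2 s hsN h2).integrable one_le_two
      simp only [hpt]
      rw [integral_add (by exact (j1.const_mul β).add (j2.const_mul α)) (by exact j3.const_mul _),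
        integral_add (by exact j1.const_mul β) (by exact j2.const_mul α),
        integral_const_mul, integral_const_mul, integral_const_mul,
        ih s (by omega) h2, hcov2 (n+2) s (by omega) (by omega) h2, hYmean s hsN h2]
      have hpow : ρ ^ (s - (n+1)) = ρ ^ (s - (n+2)) * ρ := by
        rw [← pow_succ]; congr 1; omega
      rw [hpow]
      field_simp
      ring
  -- bias
  have hb : ∀ n : ℕ, n + 1 ≤ N →
      ∫ ω, (mhat (n+1) ω - m (n+1)) ∂μ = -(K/(N:ℝ)) * β * (1 - β^n) / α := by
    intro n
    induction n with
    | zero =>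
      intro h
      simp only [hm1]
      rw [hYmean 1 le_rfl h]
      simp
    | succ n ih =>
      intro h
      have hpt : ∀ ω, mhat (n+2) ω - m (n+2)
          = β * (mhat (n+1) ω - m (n+1)) + α * (X (n+2) ω - m (n+2)) + (-(β * (K / N))) := by
        intro ω; rw [hrec n h ω]; ring
      have iA : Integrable (fun ω => mhat (n+1) ω - m (n+1)) μ :=
        (heL2 n (by omega)).integrable one_le_two
      have iB : Integrable (fun ω => X (n+2) ω - m (n+2)) μ :=
        (hYL2 (n+2) (by omega) h).integrable one_le_two
      simp only [hpt]
      rw [integral_add (by exact (iA.const_mul β).add (iB.const_mul α)) (integrable_const _),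
        integral_add (by exact iA.const_mul β) (by exact iB.const_mul α),
        integral_const_mul, integral_const_mul,
        ih (by omega), hYmean (n+2) (by omega) h, integral_const]
      simp only [probReal_univ, measure_univ, ENNReal.toReal_one, smul_eq_mul, one_mul, mul_zero, add_zero]
      rw [hαβ]
      field_simp
      ring
  -- main induction
  have hM : ∀ n : ℕ, n + 1 ≤ N →
      ∫ ω, (mhat (n+1) ω - m (n+1)) ^ 2 ∂μ = Faux θ σ α β K N ρ n := by
    intro n
    induction n with
    | zero =>
      intro h
      simp only [hm1]
      rw [hvar 1 le_rfl h, faux_base]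
    | succ n ih =>
      intro h
      have hA2 : MemLp (fun ω => mhat (n+1) ω - m (n+1)) 2 μ := heL2 n (by omega)
      have hB2 : MemLp (fun ω => X (n+2) ω - m (n+2)) 2 μ := hYL2 (n+2) (by omega) h
      have iAA : Integrable (fun ω => (mhat (n+1) ω - m (n+1)) ^ 2) μ := by
        have := integrable_mul_of_memL2 hA2 hA2
        simpa [pow_two] using this
      have iBB : Integrable (fun ω => (X (n+2) ω - m (n+2)) ^ 2) μ := by
        have := integrable_mul_of_memL2 hB2 hB2
        simpa [pow_two] using this
      have iAB : Integrable (fun ω => (mhat (n+1) ω - m (n+1)) * (X (n+2) ω - m (n+2))) μ :=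
        integrable_mul_of_memL2 hA2 hB2
      have iA : Integrable (fun ω => mhat (n+1) ω - m (n+1)) μ := hA2.integrable one_le_two
      have iB : Integrable (fun ω => X (n+2) ω - m (n+2)) μ := hB2.integrable one_le_two
      have hpt : ∀ ω, (mhat (n+2) ω - m (n+2)) ^ 2
          = β^2 * (mhat (n+1) ω - m (n+1)) ^ 2
            + α^2 * (X (n+2) ω - m (n+2)) ^ 2
            + (β^2 * (K/(N:ℝ))^2
            + (2*α*β) * ((mhat (n+1) ω - m (n+1)) * (X (n+2) ω - m (n+2)))
            + (-(2*β^2*(K/(N:ℝ)))) * (mhat (n+1) ω - m (n+1))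
            + (-(2*α*β*(K/(N:ℝ)))) * (X (n+2) ω - m (n+2))) := by
        intro ω; rw [hrec n h ω]; ring
      simp only [hpt]
      have i1 : Integrable (fun ω => β^2 * (mhat (n+1) ω - m (n+1)) ^ 2) μ := iAA.const_mul _
      have i2 : Integrable (fun ω => α^2 * (X (n+2) ω - m (n+2)) ^ 2) μ := iBB.const_mul _
      have i4 : Integrable (fun ω => (2*α*β) * ((mhat (n+1) ω - m (n+1)) * (X (n+2) ω - m (n+2)))) μ := iAB.const_mul _
      have i5 : Integrable (fun ω => (-(2*β^2*(K/(N:ℝ)))) * (mhat (n+1) ω - m (n+1))) μ := iA.const_mul _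
      have i6 : Integrable (fun ω => (-(2*α*β*(K/(N:ℝ)))) * (X (n+2) ω - m (n+2))) μ := iB.const_mul _
      have irest : Integrable (fun ω => β^2 * (K/(N:ℝ))^2
            + (2*α*β) * ((mhat (n+1) ω - m (n+1)) * (X (n+2) ω - m (n+2)))
            + (-(2*β^2*(K/(N:ℝ)))) * (mhat (n+1) ω - m (n+1))
            + (-(2*α*β*(K/(N:ℝ)))) * (X (n+2) ω - m (n+2))) μ := by
        exact (((integrable_const _).add i4).add i5).add i6
      have hDn := hD n (n+2) (by omega) h
      rw [show n+2-(n+1) = 1 from by omega, pow_one] at hDn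
      rw [integral_add (by exact i1.add i2) irest,
        integral_add i1 i2,
        integral_add (by exact ((integrable_const _).add i4).add i5) i6,
        integral_add (by exact (integrable_const _).add i4) i5,
        integral_add (integrable_const _) i4]
      simp only [integral_const_mul, integral_const, probReal_univ, measure_univ, ENNReal.toReal_one, one_smul]
      rw [ih (by omega), hvar (n+2) (by omega) h, hb n (by omega),
        hYmean (n+2) (by omega) h, hDn]
      rw [faux_step θ σ α β K ρ N n hαβ hθ' hρne hα0' h1β hNne hβρ hβmρ]
      ring
  -- conclusion
  obtain ⟨n0, rfl⟩ : ∃ n0, N = n0 + 2 := ⟨N - 2, by omega⟩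
  have hfin := hM (n0+1) (by omega)
  rw [show n0+1+1 = n0+2 from rfl] at hfin
  rw [hfin, faux_final θ σ α β K (Real.exp (θ/(n0+2:ℕ))) ρ (n0+2) (n0+1) hθ' hρne hEρ hβρ hβmρ]
  have hexpθ : Real.exp (-θ) = ρ ^ ((n0+2 : ℕ)) := by
    rw [hρdef, ← Real.exp_nat_mul]
    congr 1
    field_simp
  rw [hexpθ]
  rw [show (n0+2:ℕ) - 1 = n0+1 from rfl]
  rw [show 2*(n0+2) - 1 = 2*(n0+1)+1 from by omega]
  rw [show (n0+2) + 1 = (n0+1) + 2 from by omega]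
  rw [show 2*(n0+2) = 2*(n0+1)+2 from by omega]
end

section
/- Let N ≥ 1 be an integer and θ > 0. Then ∑_{i=1}^{N} ∑_{j=1}^{N} e^{−(θ/N)|i−j|} = (N·e^{−θ/N} − N·e^{θ/N} + 2 − 2·e^{−θ}) / ((1 − e^{θ/N})·(1 − e^{−θ/N})). -/
open Real

lemma geom_rev (r : ℝ) (N : ℕ) :
    ∑ i ∈ Finset.range N, r ^ (N - i) = r * ∑ i ∈ Finset.range N, r ^ i := by
  rw [Finset.mul_sum, ← Finset.sum_range_reflect]
  apply Finset.sum_congr rfl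
  intro i hi
  have hi' : i < N := Finset.mem_range.mp hi
  have h : N - (N - 1 - i) = i + 1 := by omega
  rw [h, pow_succ']

lemma kernel_sum (r : ℝ) (hr : r ≠ 1) (N : ℕ) :
    ∑ i ∈ Finset.range N, ∑ j ∈ Finset.range N, r ^ (Nat.dist i j)
      = ((N : ℝ) - N * r ^ 2 - 2 * r + 2 * r ^ (N + 1)) / (1 - r) ^ 2 := by
  induction N with
  | zero => simp
  | succ N ih =>
    have hsub : (1:ℝ) - r ≠ 0 := sub_ne_zero.mpr (Ne.symm hr)
    have hrow : ∀ i ∈ Finset.range N, r ^ (Nat.dist i N) = r ^ (N - i) := by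
      intro i hi
      rw [Nat.dist_eq_sub_of_le (le_of_lt (Finset.mem_range.mp hi))]
    have hrow' : ∀ j ∈ Finset.range N, r ^ (Nat.dist N j) = r ^ (N - j) := by
      intro j hj
      rw [Nat.dist_eq_sub_of_le_right (le_of_lt (Finset.mem_range.mp hj))]
    rw [Finset.sum_range_succ]
    have h1 : ∑ i ∈ Finset.range N, ∑ j ∈ Finset.range (N+1), r ^ (Nat.dist i j)
        = (∑ i ∈ Finset.range N, ∑ j ∈ Finset.range N, r ^ (Nat.dist i j))
          + r * ∑ i ∈ Finset.range N, r ^ i := by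
      rw [← geom_rev, ← Finset.sum_add_distrib]
      apply Finset.sum_congr rfl
      intro i hi
      rw [Finset.sum_range_succ, hrow i hi]
    have h2 : ∑ j ∈ Finset.range (N+1), r ^ (Nat.dist N j)
        = r * (∑ i ∈ Finset.range N, r ^ i) + 1 := by
      rw [Finset.sum_range_succ, Nat.dist_self, pow_zero, ← geom_rev,
        Finset.sum_congr rfl hrow']
    have hsub' : r - 1 ≠ 0 := sub_ne_zero.mpr hr
    rw [h1, h2, ih, geom_sum_eq hr]
    push_cast
    field_simp
    ring

lemma cast_nat_dist (i j : ℕ) : (Nat.dist i j : ℝ) = |(i:ℝ) - j| := by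
  rcases le_total i j with h | h
  · rw [Nat.dist_eq_sub_of_le h, Nat.cast_sub h, abs_sub_comm,
      abs_of_nonneg (sub_nonneg.mpr (Nat.cast_le.mpr h))]
  · rw [Nat.dist_eq_sub_of_le_right h, Nat.cast_sub h,
      abs_of_nonneg (sub_nonneg.mpr (Nat.cast_le.mpr h))]

/-- Double sum of the exponential correlation kernel `e^{-(θ/N)|i-j|}`
over `i, j ∈ {1, …, N}`. -/
theorem sum_exp_correlation_kernel (N : ℕ) (hN : 1 ≤ N) (θ : ℝ) (hθ : 0 < θ) :
    ∑ i ∈ Finset.Icc 1 N, ∑ j ∈ Finset.Icc 1 N,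
        Real.exp (-(θ / N) * |(i : ℝ) - (j : ℝ)|)
      = ((N : ℝ) * Real.exp (-(θ / N)) - (N : ℝ) * Real.exp (θ / N)
          + 2 - 2 * Real.exp (-θ))
        / ((1 - Real.exp (θ / N)) * (1 - Real.exp (-(θ / N)))) := by
  set r : ℝ := Real.exp (-(θ / N)) with hr
  have hN0 : (0:ℝ) < N := by exact_mod_cast hN
  have hx : 0 < θ / N := div_pos hθ hN0
  have hr1 : r < 1 := by
    rw [hr, Real.exp_lt_one_iff]; linarith
  have hrne : r ≠ 1 := ne_of_lt hr1
  have hkey : ∑ i ∈ Finset.Icc 1 N, ∑ j ∈ Finset.Icc 1 N,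
      Real.exp (-(θ / N) * |(i : ℝ) - (j : ℝ)|)
      = ∑ i ∈ Finset.range N, ∑ j ∈ Finset.range N, r ^ (Nat.dist i j) := by
    rw [show Finset.Icc 1 N = Finset.Ico 1 (N+1) by rfl, Finset.sum_Ico_eq_sum_range]
    simp only [Nat.add_sub_cancel]
    apply Finset.sum_congr rfl
    intro i _
    rw [Finset.sum_Ico_eq_sum_range]
    simp only [Nat.add_sub_cancel]
    apply Finset.sum_congr rfl
    intro j _
    rw [← cast_nat_dist, show Nat.dist (1+i) (1+j) = Nat.dist i j from
      Nat.dist_add_add_left 1 i j, mul_comm, Real.exp_nat_mul]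
  rw [hkey, kernel_sum r hrne N]
  have hrpos : 0 < r := Real.exp_pos _
  have hrN : r ^ N = Real.exp (-θ) := by
    rw [hr, ← Real.exp_nat_mul]
    congr 1
    field_simp
  have hrinv : Real.exp (θ / N) = r⁻¹ := by
    rw [hr, ← Real.exp_neg, neg_neg]
  rw [hrN.symm, hrinv]
  have hsub : (1:ℝ) - r ≠ 0 := sub_ne_zero.mpr (Ne.symm hrne)
  have hr0 : r ≠ 0 := ne_of_gt hrpos
  have hs2 : ((1:ℝ) - r)^2 ≠ 0 := pow_ne_zero _ hsub
  have hden : (1 - r⁻¹) * (1 - r) = -((1-r)^2) / r := by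
    field_simp
    ring
  have hdne : -((1-r)^2)/r ≠ 0 := div_ne_zero (neg_ne_zero.mpr hs2) hr0
  rw [hden, div_eq_div_iff hs2 hdne]
  field_simp
  ring
end

section
/- Let N ≥ 2 be an integer, θ > 0, σ > 0, and m* ∈ ℝ. Let X_1, …, X_N be square-integrable real random variables with E[X_i] = m* for all i and Cov(X_i, X_j) = (σ²/(2θ))·e^{−(θ/N)|i−j|} for all i, j ∈ {1,…,N}; let C denote this covariance matrix, A = (a_{ij}) its inverse, and define M̂ := (∑_{i,j=1}^{N} a_{ij}·X_j) / (∑_{i,j=1}^{N} a_{ij}). Then E[(M̂ − m*)²] = σ²·(1 − e^{−2θ/N}) / (2θ·(N + (N−2)·e^{−2θ/N} − 2(N−1)·e^{−θ/N})). -/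
open MeasureTheory Real

noncomputable def bentOU (N : ℕ) (r : ℝ) (i j : ℕ) : ℝ :=
  if j = i then (if i = 0 ∨ i = N - 1 then 1 else 1 + r ^ 2)
  else if j = i + 1 ∨ j + 1 = i then -r else 0

lemma ndistOU {a b e : ℕ} (h : b ≤ a ∧ a - b = e ∨ a ≤ b ∧ b - a = e) :
    Nat.dist a b = e := by
  rcases h with ⟨h, rfl⟩ | ⟨h, rfl⟩
  · exact Nat.dist_eq_sub_of_le_right h
  · exact Nat.dist_eq_sub_of_le h

lemma bentOU_row (N : ℕ) (r : ℝ) (i : ℕ) (hi : i < N) (g : ℕ → ℝ) :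
    ∑ j ∈ Finset.range N, bentOU N r i j * g j
      = (if i = 0 ∨ i = N - 1 then 1 else 1 + r ^ 2) * g i
        + (if i + 1 < N then -r * g (i + 1) else 0)
        + (if 0 < i then -r * g (i - 1) else 0) := by
  have hsplit : ∀ j, bentOU N r i j * g j
      = (if j = i then (if i = 0 ∨ i = N - 1 then 1 else 1 + r ^ 2) * g j else 0)
        + (if j = i + 1 then -r * g j else 0)
        + (if j + 1 = i then -r * g j else 0) := by
    intro j
    unfold bentOU
    split_ifs <;> first | (exfalso; omega) | ring
  rw [Finset.sum_congr rfl fun j _ => hsplit j, Finset.sum_add_distrib,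
    Finset.sum_add_distrib, Finset.sum_ite_eq' (Finset.range N) i,
    Finset.sum_ite_eq' (Finset.range N) (i + 1)]
  congr 1
  · congr 1
    · simp [Finset.mem_range, hi]
    · simp [Finset.mem_range]
  · cases i with
    | zero => simp
    | succ i' =>
      have h1 : ∀ j : ℕ, (j + 1 = i' + 1) = (j = i') := by
        intro j; simp
      simp only [h1]
      rw [Finset.sum_ite_eq' (Finset.range N) i']
      have h2 : i' < N := by omega
      simp [Finset.mem_range, h2]

lemma bentOU_key {N : ℕ} (hN : 2 ≤ N) (r c : ℝ) {i k : ℕ} (hi : i < N) (hk : k < N) :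
    (if i = 0 ∨ i = N - 1 then 1 else 1 + r ^ 2) * (c * r ^ Nat.dist i k)
      + (if i + 1 < N then -r * (c * r ^ Nat.dist (i + 1) k) else 0)
      + (if 0 < i then -r * (c * r ^ Nat.dist (i - 1) k) else 0)
      = if i = k then c * (1 - r ^ 2) else 0 := by
  by_cases h0 : i = 0
  · subst h0
    rw [if_pos (Or.inl rfl), if_pos (show 0 + 1 < N by omega), if_neg (lt_irrefl 0)]
    rcases Nat.eq_zero_or_pos k with rfl | hkpos
    · rw [ndistOU (a := 0) (b := 0) (e := 0) (by omega),
        ndistOU (a := 0 + 1) (b := 0) (e := 1) (by omega), if_pos rfl]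
      ring
    · obtain ⟨t, rfl⟩ : ∃ t, k = t + 1 := ⟨k - 1, by omega⟩
      rw [ndistOU (a := 0) (b := t + 1) (e := t + 1) (by omega),
        ndistOU (a := 0 + 1) (b := t + 1) (e := t) (by omega), if_neg (by omega)]
      rw [pow_succ]; ring
  · by_cases h1 : i = N - 1
    · rw [if_pos (Or.inr h1), if_neg (by omega), if_pos (by omega)]
      rcases Nat.lt_trichotomy k i with hlt | heq | hgt
      · obtain ⟨t, rfl⟩ : ∃ t, i = k + 1 + t := ⟨i - k - 1, by omega⟩
        rw [show k + 1 + t - 1 = k + t from by omega,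
          ndistOU (a := k + 1 + t) (b := k) (e := t + 1) (by omega),
          ndistOU (a := k + t) (b := k) (e := t) (by omega), if_neg (by omega)]
        rw [pow_succ]; ring
      · rw [heq]
        rw [ndistOU (a := i) (b := i) (e := 0) (by omega),
          ndistOU (a := i - 1) (b := i) (e := 1) (by omega), if_pos rfl]
        ring
      · omega
    · rw [if_neg (by omega), if_pos (by omega), if_pos (by omega)]
      rcases Nat.lt_trichotomy k i with hlt | heq | hgt
      · obtain ⟨t, rfl⟩ : ∃ t, i = k + 1 + t := ⟨i - k - 1, by omega⟩
        rw [show k + 1 + t - 1 = k + t from by omega,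
          ndistOU (a := k + 1 + t) (b := k) (e := t + 1) (by omega),
          ndistOU (a := k + 1 + t + 1) (b := k) (e := t + 2) (by omega),
          ndistOU (a := k + t) (b := k) (e := t) (by omega), if_neg (by omega)]
        rw [show t + 2 = (t + 1) + 1 from rfl, pow_succ, pow_succ]; ring
      · rw [heq]
        rw [ndistOU (a := i) (b := i) (e := 0) (by omega),
          ndistOU (a := i + 1) (b := i) (e := 1) (by omega),
          ndistOU (a := i - 1) (b := i) (e := 1) (by omega), if_pos rfl]
        ring
      · obtain ⟨t, rfl⟩ : ∃ t, k = i + 1 + t := ⟨k - i - 1, by omega⟩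
        rw [ndistOU (a := i) (b := i + 1 + t) (e := t + 1) (by omega),
          ndistOU (a := i + 1) (b := i + 1 + t) (e := t) (by omega),
          ndistOU (a := i - 1) (b := i + 1 + t) (e := t + 2) (by omega),
          if_neg (by omega)]
        rw [show t + 2 = (t + 1) + 1 from rfl, pow_succ, pow_succ]; ring

lemma bentOU_total {N : ℕ} (hN : 2 ≤ N) (r : ℝ) :
    ∑ i ∈ Finset.range N, ∑ j ∈ Finset.range N, bentOU N r i j
      = (N : ℝ) * (1 - r) ^ 2 + 2 * ((1 - r) - (1 - r) ^ 2) := by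
  have hrow : ∀ i ∈ Finset.range N, ∑ j ∈ Finset.range N, bentOU N r i j
      = (1 - r) ^ 2 + ((if i = 0 then (1 - r) - (1 - r) ^ 2 else 0)
          + (if i = N - 1 then (1 - r) - (1 - r) ^ 2 else 0)) := by
    intro i hi
    rw [Finset.mem_range] at hi
    have h1 : ∑ j ∈ Finset.range N, bentOU N r i j
        = ∑ j ∈ Finset.range N, bentOU N r i j * (fun _ : ℕ => (1:ℝ)) j := by
      simp
    rw [h1, bentOU_row N r i hi]
    by_cases h0 : i = 0
    · subst h0
      rw [if_pos (Or.inl rfl), if_pos (show 0 + 1 < N by omega),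
        if_neg (lt_irrefl 0), if_pos rfl, if_neg (by omega)]
      ring
    · by_cases h2 : i = N - 1
      · rw [if_pos (Or.inr h2), if_neg (by omega), if_pos (by omega),
          if_neg h0, if_pos h2]
        ring
      · rw [if_neg (by omega), if_pos (by omega), if_pos (by omega),
          if_neg h0, if_neg h2]
        ring
  rw [Finset.sum_congr rfl hrow, Finset.sum_add_distrib, Finset.sum_add_distrib,
    Finset.sum_const, Finset.sum_ite_eq' (Finset.range N) 0,
    Finset.sum_ite_eq' (Finset.range N) (N - 1)]
  have m0 : (0 : ℕ) ∈ Finset.range N := by simp; omega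
  have m1 : N - 1 ∈ Finset.range N := by simp; omega
  rw [if_pos m0, if_pos m1, Finset.card_range, nsmul_eq_mul]
  ring
/-- Exact mean square error of the global maximum likelihood estimator of a
constant drift perturbed by a stationary Ornstein–Uhlenbeck process. -/
theorem mse_mle_ornstein_uhlenbeck
    {Ω : Type*} [MeasurableSpace Ω] (μ : Measure Ω) [IsProbabilityMeasure μ]
    (N : ℕ) (hN : 2 ≤ N) (θ σ mstar : ℝ) (hθ : 0 < θ) (hσ : 0 < σ)
    (X : Fin N → Ω → ℝ)
    (hL2 : ∀ i, MemLp (X i) 2 μ)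
    (hmean : ∀ i, ∫ ω, X i ω ∂μ = mstar)
    (C A : Matrix (Fin N) (Fin N) ℝ)
    (hC : ∀ i j, C i j
      = σ ^ 2 / (2 * θ) * Real.exp (-(θ / N) * (Nat.dist i.val j.val : ℝ)))
    (hcov : ∀ i j, ∫ ω, (X i ω - mstar) * (X j ω - mstar) ∂μ = C i j)
    (hA : A = C⁻¹) :
    ∫ ω, ((∑ i, ∑ j, A i j * X j ω) / (∑ i, ∑ j, A i j) - mstar) ^ 2 ∂μ
      = σ ^ 2 * (1 - Real.exp (-(2 * θ / N)))
        / (2 * θ * ((N : ℝ) + ((N : ℝ) - 2) * Real.exp (-(2 * θ / N))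
            - 2 * ((N : ℝ) - 1) * Real.exp (-(θ / N)))) := by
  classical
  have hNR : (2 : ℝ) ≤ (N : ℝ) := by exact_mod_cast hN
  have hN0 : (0 : ℝ) < (N : ℝ) := by linarith
  set r : ℝ := Real.exp (-(θ / N)) with hr_def
  have hr0 : 0 < r := Real.exp_pos _
  have hr1 : r < 1 := by
    rw [hr_def]
    calc Real.exp (-(θ / (N : ℝ))) < Real.exp 0 :=
          Real.exp_lt_exp.mpr (neg_lt_zero.mpr (div_pos hθ hN0))
      _ = 1 := Real.exp_zero
  set c : ℝ := σ ^ 2 / (2 * θ) with hc_def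
  have hc0 : 0 < c := by rw [hc_def]; positivity
  set d : ℝ := c * (1 - r ^ 2) with hd_def
  have hd0 : 0 < d := by
    rw [hd_def]; apply mul_pos hc0; nlinarith
  have hCent : ∀ i j : Fin N, C i j = c * r ^ (Nat.dist i.val j.val) := by
    intro i j
    have h1 : r ^ (Nat.dist i.val j.val)
        = Real.exp ((Nat.dist i.val j.val : ℝ) * (-(θ / N))) := by
      rw [hr_def, ← Real.exp_nat_mul]
    rw [hC i j, h1]
    congr 1
    ring
  have hCsymm : ∀ i j : Fin N, C i j = C j i := fun i j => by
    rw [hCent, hCent, Nat.dist_comm]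
  set B : Matrix (Fin N) (Fin N) ℝ :=
    Matrix.of (fun i j : Fin N => bentOU N r i.val j.val / d) with hB_def
  have hBapp : ∀ i j : Fin N, B i j = bentOU N r i.val j.val / d := by
    intro i j; rw [hB_def]; rfl
  have hrowB : ∀ i k : Fin N, ∑ j : Fin N, B i j * C j k
      = (if i.val = k.val then c * (1 - r ^ 2) else 0) / d := by
    intro i k
    have e1 : ∑ j : Fin N, B i j * C j k
        = (∑ j ∈ Finset.range N, bentOU N r i.val j * (c * r ^ Nat.dist j k.val)) / d := by
      rw [Finset.sum_div,
        ← Fin.sum_univ_eq_sum_range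
          (fun jv => bentOU N r i.val jv * (c * r ^ Nat.dist jv k.val) / d) N]
      exact Finset.sum_congr rfl fun j _ => by
        simp only [hBapp, hCent]; ring
    rw [e1, bentOU_row N r i.val i.isLt
      (fun jv => c * r ^ Nat.dist jv k.val), bentOU_key hN r c i.isLt k.isLt]
  have hBC : B * C = 1 := by
    ext i k
    rw [Matrix.mul_apply, Matrix.one_apply, hrowB i k]
    by_cases h : i = k
    · rw [if_pos (by rw [h]), if_pos h, ← hd_def]
      exact div_self hd0.ne'
    · rw [if_neg (fun hv => h (Fin.ext hv)), if_neg h, zero_div]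
  have hAB : A = B := by rw [hA]; exact Matrix.inv_eq_left_inv hBC
  -- value of the total sum of entries of B
  have hT_pos : (0 : ℝ) < (N : ℝ) * (1 - r) ^ 2 + 2 * ((1 - r) - (1 - r) ^ 2) := by
    nlinarith [mul_nonneg (show (0:ℝ) ≤ (N:ℝ) - 2 by linarith) (sq_nonneg (1 - r))]
  have e2 : ∀ i : Fin N, ∑ j : Fin N, B i j
      = (∑ j ∈ Finset.range N, bentOU N r i.val j) / d := by
    intro i
    rw [Finset.sum_div,
      ← Fin.sum_univ_eq_sum_range (fun jv => bentOU N r i.val jv / d) N]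
    exact Finset.sum_congr rfl fun j _ => by simp only [hBapp]
  have hSval : ∑ i : Fin N, ∑ j : Fin N, B i j
      = ((N : ℝ) * (1 - r) ^ 2 + 2 * ((1 - r) - (1 - r) ^ 2)) / d := by
    rw [Finset.sum_congr rfl fun i _ => e2 i, ← Finset.sum_div,
      Fin.sum_univ_eq_sum_range (fun iv => ∑ j ∈ Finset.range N, bentOU N r iv j) N,
      bentOU_total hN r]
  have hS_pos : (0 : ℝ) < ∑ i : Fin N, ∑ j : Fin N, B i j := by
    rw [hSval]; exact div_pos hT_pos hd0
  have hS_ne : (∑ i : Fin N, ∑ j : Fin N, B i j) ≠ 0 := ne_of_gt hS_pos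
  -- C applied to the vector of column sums of B gives the all-ones vector
  have hCw : ∀ j : Fin N, ∑ k : Fin N, C j k * (∑ i : Fin N, B i k) = 1 := by
    intro j
    have h1 : ∀ k : Fin N, C j k * (∑ i : Fin N, B i k)
        = ∑ i : Fin N, B i k * C k j := by
      intro k
      rw [hCsymm j k, Finset.mul_sum]
      exact Finset.sum_congr rfl fun i _ => mul_comm _ _
    rw [Finset.sum_congr rfl fun k _ => h1 k, Finset.sum_comm]
    have h2 : ∀ i : Fin N, ∑ k : Fin N, B i k * C k j = if i = j then (1:ℝ) else 0 := by
      intro i; rw [← Matrix.mul_apply, hBC, Matrix.one_apply]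
    rw [Finset.sum_congr rfl fun i _ => h2 i,
      Finset.sum_ite_eq' Finset.univ j (fun _ => (1:ℝ))]
    simp
  -- the quadratic form of C at the column-sum vector equals the total sum
  have hQ : ∑ j : Fin N, ∑ k : Fin N,
        ((∑ i : Fin N, B i j) * (∑ i : Fin N, B i k)) * C j k
      = ∑ i : Fin N, ∑ j : Fin N, B i j := by
    have h1 : ∀ j : Fin N, ∑ k : Fin N,
          ((∑ i : Fin N, B i j) * (∑ i : Fin N, B i k)) * C j k
        = (∑ i : Fin N, B i j) * ∑ k : Fin N, C j k * (∑ i : Fin N, B i k) := by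
      intro j
      rw [Finset.mul_sum]
      exact Finset.sum_congr rfl fun k _ => by ring
    rw [Finset.sum_congr rfl fun j _ => h1 j]
    have h2 : ∀ j : Fin N, (∑ i : Fin N, B i j)
          * (∑ k : Fin N, C j k * (∑ i : Fin N, B i k)) = ∑ i : Fin N, B i j := by
      intro j; rw [hCw j, mul_one]
    rw [Finset.sum_congr rfl fun j _ => h2 j]
    exact Finset.sum_comm
  -- integrability
  have hZ2 : ∀ j, MemLp (fun ω => X j ω - mstar) 2 μ :=
    fun j => (hL2 j).sub (memLp_const mstar)
  have hZint : ∀ j k, Integrable (fun ω => (X j ω - mstar) * (X k ω - mstar)) μ := by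
    intro j k
    rw [← memLp_one_iff_integrable]
    have := (hZ2 j).smul (φ := fun ω => X k ω - mstar) (hZ2 k) (r := 1)
      (hpqr := ⟨by simp [one_div, ENNReal.inv_two_add_inv_two]⟩)
    simpa [smul_eq_mul, mul_comm, Pi.mul_def] using this
  have hterm_int : ∀ j k : Fin N, Integrable (fun ω =>
      ((∑ i : Fin N, B i j) * (X j ω - mstar))
        * ((∑ i : Fin N, B i k) * (X k ω - mstar))) μ := by
    intro j k
    have h1 : (fun ω => ((∑ i : Fin N, B i j) * (X j ω - mstar))
          * ((∑ i : Fin N, B i k) * (X k ω - mstar)))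
        = fun ω => ((∑ i : Fin N, B i j) * (∑ i : Fin N, B i k))
          * ((X j ω - mstar) * (X k ω - mstar)) := by
      funext ω; ring
    rw [h1]
    exact (hZint j k).const_mul _
  have hterm_val : ∀ j k : Fin N, ∫ ω, ((∑ i : Fin N, B i j) * (X j ω - mstar))
        * ((∑ i : Fin N, B i k) * (X k ω - mstar)) ∂μ
      = ((∑ i : Fin N, B i j) * (∑ i : Fin N, B i k)) * C j k := by
    intro j k
    have h1 : (fun ω => ((∑ i : Fin N, B i j) * (X j ω - mstar))
          * ((∑ i : Fin N, B i k) * (X k ω - mstar)))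
        = fun ω => ((∑ i : Fin N, B i j) * (∑ i : Fin N, B i k))
          * ((X j ω - mstar) * (X k ω - mstar)) := by
      funext ω; ring
    rw [h1, integral_const_mul, hcov j k]
  -- pointwise rewriting of the integrand
  have hpt : ∀ ω : Ω, ((∑ i, ∑ j, A i j * X j ω) / (∑ i, ∑ j, A i j) - mstar) ^ 2
      = (∑ j : Fin N, (∑ i : Fin N, B i j) * (X j ω - mstar)) ^ 2
        / (∑ i : Fin N, ∑ j : Fin N, B i j) ^ 2 := by
    intro ω
    rw [hAB]
    have h1 : ∑ i : Fin N, ∑ j : Fin N, B i j * X j ω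
        = ∑ j : Fin N, (∑ i : Fin N, B i j) * X j ω := by
      rw [Finset.sum_comm]
      exact Finset.sum_congr rfl fun j _ => (Finset.sum_mul _ _ _).symm
    have hswap : (∑ i : Fin N, ∑ j : Fin N, B i j)
        = ∑ j : Fin N, ∑ i : Fin N, B i j := Finset.sum_comm
    have h2 : ∑ j : Fin N, (∑ i : Fin N, B i j) * (X j ω - mstar)
        = (∑ j : Fin N, (∑ i : Fin N, B i j) * X j ω)
          - (∑ i : Fin N, ∑ j : Fin N, B i j) * mstar := by
      calc ∑ j : Fin N, (∑ i : Fin N, B i j) * (X j ω - mstar)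
          = ∑ j : Fin N, ((∑ i : Fin N, B i j) * X j ω
              - (∑ i : Fin N, B i j) * mstar) :=
            Finset.sum_congr rfl fun j _ => by ring
        _ = (∑ j : Fin N, (∑ i : Fin N, B i j) * X j ω)
              - ∑ j : Fin N, (∑ i : Fin N, B i j) * mstar :=
            Finset.sum_sub_distrib _ _
        _ = _ := by rw [hswap, Finset.sum_mul]
    rw [h1, h2, ← div_pow, sub_div, mul_div_cancel_left₀ _ hS_ne]
  simp only [hpt]
  rw [integral_div]
  have hsq : ∀ ω : Ω, (∑ j : Fin N, (∑ i : Fin N, B i j) * (X j ω - mstar)) ^ 2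
      = ∑ j : Fin N, ∑ k : Fin N, ((∑ i : Fin N, B i j) * (X j ω - mstar))
          * ((∑ i : Fin N, B i k) * (X k ω - mstar)) := by
    intro ω
    rw [sq, Finset.sum_mul_sum]
  simp only [hsq]
  rw [integral_finset_sum _
    (fun j _ => integrable_finset_sum _ (fun k _ => hterm_int j k))]
  have hin : ∀ j ∈ Finset.univ, (∫ ω, ∑ k : Fin N,
        ((∑ i : Fin N, B i j) * (X j ω - mstar))
          * ((∑ i : Fin N, B i k) * (X k ω - mstar)) ∂μ)
      = ∑ k : Fin N, ((∑ i : Fin N, B i j) * (∑ i : Fin N, B i k)) * C j k := by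
    intro j _
    rw [integral_finset_sum _ (fun k _ => hterm_int j k)]
    exact Finset.sum_congr rfl fun k _ => hterm_val j k
  rw [Finset.sum_congr rfl hin, hQ, hSval]
  -- final arithmetic
  have hr2 : Real.exp (-(2 * θ / (N : ℝ))) = r ^ 2 := by
    rw [hr_def, ← Real.exp_nat_mul]
    congr 1
    push_cast
    ring
  rw [hr2]
  have hden : (N : ℝ) + ((N : ℝ) - 2) * r ^ 2 - 2 * ((N : ℝ) - 1) * r
      = (N : ℝ) * (1 - r) ^ 2 + 2 * ((1 - r) - (1 - r) ^ 2) := by ring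
  rw [hden, hd_def, hc_def]
  have h1r2 : (0:ℝ) < 1 - r ^ 2 := by nlinarith
  field_simp
end

section
/- Let N ≥ 2 be an integer, θ > 0, σ > 0, α ∈ (0,1), β := 1 − α, and K ≥ 0. Let X_1, …, X_N be square-integrable real random variables with means m*_1, …, m*_N satisfying |m*_t − m*_s| ≤ (K/N)·|t−s| for all t, s, with Var(X_t) = σ²/(2θ) and Cov(X_t, X_s) = (σ²/(2θ))·e^{−(θ/N)|t−s|} for all t, s ∈ {1,…,N}. Define m̂_1 := X_1, m̂_t := (1−α)·m̂_{t−1} + α·X_t, and D_t := E[(m̂_t − m*_t)²]. Set C₁ := β²·((1+β)/(1−β))·(K²/N²) + α²·(σ²/(2θ))·((e^{θ/N}+β)/(e^{θ/N}−β)), C₂ := (2/(1−β))·(K²/N²), and C₃ := α·(σ²/θ)·((e^{θ/N}−1)/(1 − β·e^{−θ/N})). Then for every t ∈ {2,…,N}: D_t ≤ β²·D_{t−1} + C₁ − C₂·β^{t+1} + C₃·(β·e^{−θ/N})^{t}. -/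
open MeasureTheory Real

private lemma int_mul {Ω : Type*} [MeasurableSpace Ω] {μ : Measure Ω} [IsFiniteMeasure μ]
    (f g : Ω → ℝ) (hf : MemLp f 2 μ) (hg : MemLp g 2 μ) :
    Integrable (fun ω => f ω * g ω) μ := by
  have h2 : (1:ENNReal)/1 = 1/2 + 1/2 := by
    rw [ENNReal.div_add_div_same]
    norm_num
    rw [ENNReal.eq_div_iff (by norm_num) (by norm_num)]
    norm_num
  have h : MemLp (f • g) 1 μ := hg.smul hf
  exact h.integrable le_rfl

set_option maxHeartbeats 1600000 in
/-- One-step recursive inequality for the mean square error of the exponential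
smoothing estimator, with explicit constants `C₁, C₂, C₃`. -/
theorem mse_recursive_inequality
    {Ω : Type*} [MeasurableSpace Ω] (μ : Measure Ω) [IsProbabilityMeasure μ]
    (N : ℕ) (hN : 2 ≤ N) (θ σ α β K : ℝ) (hθ : 0 < θ) (hσ : 0 < σ)
    (hα : α ∈ Set.Ioo (0 : ℝ) 1) (hβ : β = 1 - α) (hK : 0 ≤ K)
    (X : ℕ → Ω → ℝ) (m : ℕ → ℝ)
    (hL2 : ∀ t, 1 ≤ t → t ≤ N → MemLp (X t) 2 μ)
    (hmean : ∀ t, 1 ≤ t → t ≤ N → ∫ ω, X t ω ∂μ = m t)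
    (hcov : ∀ t s, 1 ≤ t → t ≤ N → 1 ≤ s → s ≤ N →
      ∫ ω, (X t ω - m t) * (X s ω - m s) ∂μ
        = σ ^ 2 / (2 * θ) * Real.exp (-(θ / N) * |(t : ℝ) - (s : ℝ)|))
    (hlip : ∀ t s, 1 ≤ t → t ≤ N → 1 ≤ s → s ≤ N →
      |m t - m s| ≤ K / N * |(t : ℝ) - (s : ℝ)|)
    (mhat : ℕ → Ω → ℝ)
    (hm1 : ∀ ω, mhat 1 ω = X 1 ω)
    (hmt : ∀ t, 2 ≤ t → t ≤ N → ∀ ω,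
      mhat t ω = (1 - α) * mhat (t - 1) ω + α * X t ω)
    (C₁ C₂ C₃ : ℝ)
    (hC₁ : C₁ = β ^ 2 * ((1 + β) / (1 - β)) * (K ^ 2 / (N : ℝ) ^ 2)
      + α ^ 2 * (σ ^ 2 / (2 * θ))
        * ((Real.exp (θ / N) + β) / (Real.exp (θ / N) - β)))
    (hC₂ : C₂ = 2 / (1 - β) * (K ^ 2 / (N : ℝ) ^ 2))
    (hC₃ : C₃ = α * (σ ^ 2 / θ)
      * ((Real.exp (θ / N) - 1) / (1 - β * Real.exp (-(θ / N))))) :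
    ∀ t, 2 ≤ t → t ≤ N →
      ∫ ω, (mhat t ω - m t) ^ 2 ∂μ
        ≤ β ^ 2 * (∫ ω, (mhat (t - 1) ω - m (t - 1)) ^ 2 ∂μ)
          + C₁ - C₂ * β ^ (t + 1) + C₃ * (β * Real.exp (-(θ / N))) ^ t := by
  obtain ⟨hα0, hα1⟩ := hα
  have hβ0 : 0 < β := by rw [hβ]; linarith
  have hβ1 : β < 1 := by rw [hβ]; linarith
  have h1β : 1 - β = α := by rw [hβ]; ring
  have hN0 : (0:ℝ) < N := by
    have : (2:ℝ) ≤ N := by exact_mod_cast hN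
    linarith
  have hγ0 : 0 < θ / N := div_pos hθ hN0
  set F : ℝ := Real.exp (θ / N) with hF
  have hF1 : 1 < F := by
    rw [hF]
    exact Real.one_lt_exp_iff.mpr hγ0
  have hEneg : Real.exp (-(θ / N)) = F⁻¹ := by rw [hF, Real.exp_neg]
  have hE0 : 0 < F⁻¹ := by positivity
  have hE1 : F⁻¹ < 1 := by
    exact inv_lt_one_of_one_lt₀ hF1
  have hq0 : 0 < β * F⁻¹ := by positivity
  have hq1 : β * F⁻¹ < 1 := by
    calc β * F⁻¹ < 1 * 1 := by
          apply mul_lt_mul' (le_of_lt hβ1) hE1 (le_of_lt hE0) one_pos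
      _ = 1 := by ring
  have h1q : 0 < 1 - β * F⁻¹ := by linarith
  set v : ℝ := σ ^ 2 / (2 * θ) with hv
  have hv0 : 0 < v := by positivity
  -- L² membership of the estimator
  have hmhatL2 : ∀ s, 1 ≤ s → s ≤ N → MemLp (mhat s) 2 μ := by
    intro s hs1
    induction s, hs1 using Nat.le_induction with
    | base =>
      intro _
      have h1 : mhat 1 = X 1 := funext hm1
      rw [h1]
      exact hL2 1 le_rfl (by omega)
    | succ s hs ih =>
      intro hsN
      have heq : mhat (s + 1) = fun ω => β * mhat s ω + α * X (s + 1) ω := by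
        funext ω
        rw [hmt (s + 1) (by omega) hsN ω, hβ]
        simp
      rw [heq]
      exact ((ih (by omega)).const_mul β).add ((hL2 (s + 1) (by omega) hsN).const_mul α)
  -- mean of centered variables is zero
  have hY0 : ∀ s, 1 ≤ s → s ≤ N → ∫ ω, (X s ω - m s) ∂μ = 0 := by
    intro s hs1 hsN
    rw [integral_sub ((hL2 s hs1 hsN).integrable one_le_two) (integrable_const _),
      hmean s hs1 hsN]
    simp
  -- bias bound
  have hintE : ∀ s, 1 ≤ s → s ≤ N → Integrable (fun ω => mhat s ω - m s) μ := by
    intro s hs1 hsN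
    exact ((hmhatL2 s hs1 hsN).sub (memLp_const _)).integrable one_le_two
  have hintY : ∀ s, 1 ≤ s → s ≤ N → Integrable (fun ω => X s ω - m s) μ := by
    intro s hs1 hsN
    exact ((hL2 s hs1 hsN).sub (memLp_const _)).integrable one_le_two
  have hlip1 : ∀ s, 1 ≤ s → s + 1 ≤ N → |m s - m (s + 1)| ≤ K / N := by
    intro s hs1 hsN
    have h := hlip s (s + 1) hs1 (by omega) (by omega) hsN
    have habs : |(s : ℝ) - ((s + 1 : ℕ) : ℝ)| = 1 := by
      push_cast; rw [abs_of_nonpos (by linarith)]; ring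
    rw [habs, mul_one] at h
    exact h
  have hbrec : ∀ s, 1 ≤ s → s + 1 ≤ N →
      ∫ ω, (mhat (s + 1) ω - m (s + 1)) ∂μ
        = β * (∫ ω, (mhat s ω - m s) ∂μ) + β * (m s - m (s + 1)) := by
    intro s hs1 hsN
    have hid : ∀ ω, mhat (s + 1) ω - m (s + 1)
        = β * (mhat s ω - m s) + (α * (X (s + 1) ω - m (s + 1)) + β * (m s - m (s + 1))) := by
      intro ω
      rw [hmt (s + 1) (by omega) hsN ω, hβ]
      simp only [Nat.add_sub_cancel]
      ring
    have i2 : Integrable (fun ω => α * (X (s + 1) ω - m (s + 1))) μ :=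
      (hintY (s + 1) (by omega) hsN).const_mul α
    have i3 : Integrable (fun _ : Ω => β * (m s - m (s + 1))) μ := integrable_const _
    have i23 : Integrable
        (fun ω => α * (X (s + 1) ω - m (s + 1)) + β * (m s - m (s + 1))) μ := i2.add i3
    rw [integral_congr_ae (Filter.Eventually.of_forall hid),
      integral_add ((hintE s hs1 (by omega)).const_mul β) i23,
      integral_add i2 i3,
      integral_const_mul, integral_const_mul, hY0 (s + 1) (by omega) hsN]
    simp
  have hb : ∀ s, 1 ≤ s → s ≤ N →
      |∫ ω, (mhat s ω - m s) ∂μ| ≤ K / N * ((β - β ^ s) / α) := by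
    intro s hs1
    induction s, hs1 using Nat.le_induction with
    | base =>
      intro _
      have h1 : ∫ ω, (mhat 1 ω - m 1) ∂μ = 0 := by
        have : (fun ω => mhat 1 ω - m 1) = fun ω => X 1 ω - m 1 := by
          funext ω; rw [hm1 ω]
        rw [this]
        exact hY0 1 le_rfl (by omega)
      rw [h1]
      simp [pow_one]
    | succ s hs ih =>
      intro hsN
      rw [hbrec s hs hsN]
      have h1 := ih (by omega)
      have h2 := hlip1 s hs hsN
      have hKN : 0 ≤ K / N := by positivity
      calc |β * (∫ ω, (mhat s ω - m s) ∂μ) + β * (m s - m (s + 1))|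
          ≤ β * |∫ ω, (mhat s ω - m s) ∂μ| + β * |m s - m (s + 1)| := by
            refine (abs_add_le _ _).trans ?_
            rw [abs_mul, abs_mul, abs_of_pos hβ0]
        _ ≤ β * (K / N * ((β - β ^ s) / α)) + β * (K / N) := by
            have := mul_le_mul_of_nonneg_left h1 (le_of_lt hβ0)
            have := mul_le_mul_of_nonneg_left h2 (le_of_lt hβ0)
            linarith
        _ = K / N * ((β - β ^ (s + 1)) / α) := by
            rw [pow_succ]
            field_simp
            linear_combination K * hβ
  intro t ht2 htN
  set p := t - 1 with hpdef
  have hp1 : 1 ≤ p := by omega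
  have hpN : p ≤ N := by omega
  have htp : t = p + 1 := by omega
  -- covariance recursion (for this fixed t)
  have hg : ∀ s, 1 ≤ s → s ≤ p →
      ∫ ω, (mhat s ω - m s) * (X t ω - m t) ∂μ
        = v * ((α + (β * F⁻¹) ^ (s - 1) * (β - β * F⁻¹)) / (1 - β * F⁻¹))
            * Real.exp (-(θ / N) * ((t : ℝ) - (s : ℝ))) := by
    have hF0 : F ≠ 0 := by positivity
    intro s hs1
    induction s, hs1 using Nat.le_induction with
    | base =>
      intro _
      have hrw : (fun ω => (mhat 1 ω - m 1) * (X t ω - m t))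
          = fun ω => (X 1 ω - m 1) * (X t ω - m t) := by
        funext ω; rw [hm1 ω]
      rw [hrw, hcov 1 t le_rfl (by omega) (by omega) htN]
      have habs : |((1:ℕ) : ℝ) - (t : ℝ)| = (t : ℝ) - ((1:ℕ) : ℝ) := by
        rw [abs_sub_comm]
        apply abs_of_nonneg
        have : (1:ℝ) ≤ (t:ℝ) := by exact_mod_cast (by omega : 1 ≤ t)
        push_cast
        linarith
      rw [habs]
      have hcoef : ((α + (β * F⁻¹) ^ (1 - 1) * (β - β * F⁻¹)) / (1 - β * F⁻¹)) = 1 := by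
        norm_num
        rw [div_eq_one_iff_eq (ne_of_gt h1q)]
        linarith
      rw [hcoef]
      ring
    | succ s hs ih =>
      intro hsp
      have hsN : s + 1 ≤ N := by omega
      have hid : ∀ ω, (mhat (s + 1) ω - m (s + 1)) * (X t ω - m t)
          = β * ((mhat s ω - m s) * (X t ω - m t))
            + (α * ((X (s + 1) ω - m (s + 1)) * (X t ω - m t))
            + (β * (m s - m (s + 1))) * (X t ω - m t)) := by
        intro ω
        rw [hmt (s + 1) (by omega) hsN ω, hβ]
        simp only [Nat.add_sub_cancel]
        ring
      have hMs : MemLp (fun ω => mhat s ω - m s) 2 μ :=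
        (hmhatL2 s hs (by omega)).sub (memLp_const _)
      have hYs : MemLp (fun ω => X (s + 1) ω - m (s + 1)) 2 μ :=
        (hL2 (s + 1) (by omega) hsN).sub (memLp_const _)
      have hYt : MemLp (fun ω => X t ω - m t) 2 μ :=
        (hL2 t (by omega) htN).sub (memLp_const _)
      have j1 : Integrable (fun ω => β * ((mhat s ω - m s) * (X t ω - m t))) μ :=
        (int_mul _ _ hMs hYt).const_mul β
      have j2 : Integrable (fun ω => α * ((X (s + 1) ω - m (s + 1)) * (X t ω - m t))) μ :=
        (int_mul _ _ hYs hYt).const_mul α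
      have j3 : Integrable (fun ω => (β * (m s - m (s + 1))) * (X t ω - m t)) μ :=
        (hintY t (by omega) htN).const_mul _
      have j23 : Integrable (fun ω => α * ((X (s + 1) ω - m (s + 1)) * (X t ω - m t))
          + (β * (m s - m (s + 1))) * (X t ω - m t)) μ := j2.add j3
      rw [integral_congr_ae (Filter.Eventually.of_forall hid),
        integral_add j1 j23, integral_add j2 j3,
        integral_const_mul, integral_const_mul, integral_const_mul,
        ih (by omega), hcov (s + 1) t (by omega) hsN (by omega) htN,
        hY0 t (by omega) htN]
      have habs : |((s + 1 : ℕ) : ℝ) - (t : ℝ)| = (t : ℝ) - ((s + 1 : ℕ) : ℝ) := by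
        rw [abs_sub_comm]
        apply abs_of_nonneg
        have : (s:ℝ) + 2 ≤ (t:ℝ) := by exact_mod_cast (by omega : s + 2 ≤ t)
        push_cast
        linarith
      rw [habs]
      have hexp : Real.exp (-(θ / N) * ((t : ℝ) - (s : ℝ)))
          = F⁻¹ * Real.exp (-(θ / N) * ((t : ℝ) - ((s + 1 : ℕ) : ℝ))) := by
        rw [← hEneg, ← Real.exp_add]
        congr 1
        push_cast
        ring
      rw [hexp]
      obtain ⟨k, rfl⟩ : ∃ k, s = k + 1 := ⟨s - 1, by omega⟩
      simp only [Nat.add_sub_cancel]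
      rw [pow_succ]
      set W := (β * F⁻¹) ^ k with hW
      set E := Real.exp (-(θ / ↑N) * ((t:ℝ) - ((k + 1 + 1 : ℕ) : ℝ))) with hE
      have hFb : F - β ≠ 0 := by linarith
      field_simp [hF0, ne_of_gt h1q, hFb]
      ring
  -- expansion of the mean square error
  have hmE : MemLp (fun ω => mhat p ω - m p) 2 μ :=
    (hmhatL2 p hp1 hpN).sub (memLp_const _)
  have hmY : MemLp (fun ω => X t ω - m t) 2 μ :=
    (hL2 t (by omega) htN).sub (memLp_const _)
  have expand : ∫ ω, (mhat t ω - m t) ^ 2 ∂μ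
      = β ^ 2 * (∫ ω, (mhat p ω - m p) ^ 2 ∂μ)
        + (2 * α * β * (∫ ω, (mhat p ω - m p) * (X t ω - m t) ∂μ)
        + (2 * β ^ 2 * (m p - m t) * (∫ ω, (mhat p ω - m p) ∂μ)
        + (α ^ 2 * (∫ ω, (X t ω - m t) * (X t ω - m t) ∂μ)
        + (2 * α * β * (m p - m t) * (∫ ω, (X t ω - m t) ∂μ)
        + β ^ 2 * (m p - m t) ^ 2)))) := by
    have hid : ∀ ω, (mhat t ω - m t) ^ 2
        = β ^ 2 * ((mhat p ω - m p) ^ 2)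
          + ((2 * α * β) * ((mhat p ω - m p) * (X t ω - m t))
          + ((2 * β ^ 2 * (m p - m t)) * (mhat p ω - m p)
          + ((α ^ 2) * ((X t ω - m t) * (X t ω - m t))
          + ((2 * α * β * (m p - m t)) * (X t ω - m t)
          + β ^ 2 * (m p - m t) ^ 2)))) := by
      intro ω
      rw [hmt t ht2 htN ω, ← hpdef, hβ]
      ring
    have k1 : Integrable (fun ω => β ^ 2 * ((mhat p ω - m p) ^ 2)) μ :=
      hmE.integrable_sq.const_mul _
    have k2 : Integrable (fun ω => (2 * α * β) * ((mhat p ω - m p) * (X t ω - m t))) μ :=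
      (int_mul _ _ hmE hmY).const_mul _
    have k3 : Integrable (fun ω => (2 * β ^ 2 * (m p - m t)) * (mhat p ω - m p)) μ :=
      (hintE p hp1 hpN).const_mul _
    have k4 : Integrable (fun ω => (α ^ 2) * ((X t ω - m t) * (X t ω - m t))) μ :=
      (int_mul _ _ hmY hmY).const_mul _
    have k5 : Integrable (fun ω => (2 * α * β * (m p - m t)) * (X t ω - m t)) μ :=
      (hintY t (by omega) htN).const_mul _
    have k6 : Integrable (fun _ : Ω => β ^ 2 * (m p - m t) ^ 2) μ := integrable_const _
    have k56 : Integrable (fun ω => (2 * α * β * (m p - m t)) * (X t ω - m t)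
        + β ^ 2 * (m p - m t) ^ 2) μ := k5.add k6
    have k456 : Integrable (fun ω => (α ^ 2) * ((X t ω - m t) * (X t ω - m t))
        + ((2 * α * β * (m p - m t)) * (X t ω - m t)
        + β ^ 2 * (m p - m t) ^ 2)) μ := k4.add k56
    have k3456 : Integrable (fun ω => (2 * β ^ 2 * (m p - m t)) * (mhat p ω - m p)
        + ((α ^ 2) * ((X t ω - m t) * (X t ω - m t))
        + ((2 * α * β * (m p - m t)) * (X t ω - m t)
        + β ^ 2 * (m p - m t) ^ 2))) μ := k3.add k456
    have k23456 : Integrable (fun ω => (2 * α * β) * ((mhat p ω - m p) * (X t ω - m t))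
        + ((2 * β ^ 2 * (m p - m t)) * (mhat p ω - m p)
        + ((α ^ 2) * ((X t ω - m t) * (X t ω - m t))
        + ((2 * α * β * (m p - m t)) * (X t ω - m t)
        + β ^ 2 * (m p - m t) ^ 2)))) μ := k2.add k3456
    rw [integral_congr_ae (Filter.Eventually.of_forall hid),
      integral_add k1 k23456, integral_add k2 k3456, integral_add k3 k456,
      integral_add k4 k56, integral_add k5 k6,
      integral_const_mul, integral_const_mul, integral_const_mul, integral_const_mul,
      integral_const_mul, integral_const]
    simp
  -- variance of X t
  have hV : ∫ ω, (X t ω - m t) * (X t ω - m t) ∂μ = v := by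
    rw [hcov t t (by omega) htN (by omega) htN]
    simp [hv]
  -- covariance value at s = p
  have hG : ∫ ω, (mhat p ω - m p) * (X t ω - m t) ∂μ
      = v * ((α + (β * F⁻¹) ^ (p - 1) * (β - β * F⁻¹)) / (1 - β * F⁻¹)) * F⁻¹ := by
    rw [hg p hp1 le_rfl]
    have h1 : -(θ / (N:ℝ)) * ((t : ℝ) - (p : ℝ)) = -(θ / N) := by
      rw [htp]; push_cast; ring
    rw [h1, hEneg]
  -- covariance part: exact identity
  have hcovpart : 2 * α * β * (v * ((α + (β * F⁻¹) ^ (p - 1) * (β - β * F⁻¹)) / (1 - β * F⁻¹)) * F⁻¹)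
      + α ^ 2 * v
      = α ^ 2 * v * ((F + β) / (F - β)) + C₃ * (β * Real.exp (-(θ / N))) ^ t := by
    have hF0 : F ≠ 0 := by positivity
    have hFb : F - β ≠ 0 := by linarith
    obtain ⟨k, hk⟩ : ∃ k, p = k + 1 := ⟨p - 1, by omega⟩
    have hkt : t = k + 2 := by omega
    rw [hC₃, hEneg, hkt, hk, Nat.add_sub_cancel, hv]
    rw [show k + 2 = k + 2 from rfl, pow_add]
    set W := (β * F⁻¹) ^ k with hW
    field_simp [hF0, ne_of_gt h1q, hFb]
    ring
  -- bias part: inequality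
  have hbiaspart : β ^ 2 * (m p - m t) ^ 2
        + 2 * β ^ 2 * (m p - m t) * (∫ ω, (mhat p ω - m p) ∂μ)
      ≤ β ^ 2 * ((1 + β) / (1 - β)) * (K ^ 2 / (N : ℝ) ^ 2) - C₂ * β ^ (t + 1) := by
    have hB := hb p hp1 hpN
    have hΔ : |m p - m t| ≤ K / N := by
      have h := hlip1 p hp1 (by omega)
      rw [← htp] at h
      exact h
    have hbp : β ^ p ≤ β := by
      calc β ^ p ≤ β ^ 1 := pow_le_pow_of_le_one (le_of_lt hβ0) (le_of_lt hβ1) hp1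
        _ = β := pow_one β
    have h2 : (m p - m t) * (∫ ω, (mhat p ω - m p) ∂μ)
        ≤ (K / N) * (K / N * ((β - β ^ p) / α)) := by
      calc (m p - m t) * (∫ ω, (mhat p ω - m p) ∂μ)
          ≤ |(m p - m t) * (∫ ω, (mhat p ω - m p) ∂μ)| := le_abs_self _
        _ = |m p - m t| * |∫ ω, (mhat p ω - m p) ∂μ| := abs_mul _ _
        _ ≤ (K / N) * (K / N * ((β - β ^ p) / α)) := by
            apply mul_le_mul hΔ hB (abs_nonneg _) (by positivity)
    have hΔ2 : (m p - m t) ^ 2 ≤ (K / N) ^ 2 := by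
      rw [← sq_abs]
      apply pow_le_pow_left₀ (abs_nonneg _) hΔ
    have e1 : β ^ 2 * (m p - m t) ^ 2 ≤ β ^ 2 * (K / N) ^ 2 :=
      mul_le_mul_of_nonneg_left hΔ2 (by positivity)
    have e2 : 2 * β ^ 2 * ((m p - m t) * (∫ ω, (mhat p ω - m p) ∂μ))
        ≤ 2 * β ^ 2 * ((K / N) * (K / N * ((β - β ^ p) / α))) :=
      mul_le_mul_of_nonneg_left h2 (by positivity)
    calc β ^ 2 * (m p - m t) ^ 2
          + 2 * β ^ 2 * (m p - m t) * (∫ ω, (mhat p ω - m p) ∂μ)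
        = β ^ 2 * (m p - m t) ^ 2
          + 2 * β ^ 2 * ((m p - m t) * (∫ ω, (mhat p ω - m p) ∂μ)) := by ring
      _ ≤ β ^ 2 * (K / N) ^ 2
          + 2 * β ^ 2 * ((K / N) * (K / N * ((β - β ^ p) / α))) := by linarith
      _ = β ^ 2 * ((1 + β) / (1 - β)) * (K ^ 2 / (N : ℝ) ^ 2) - C₂ * β ^ (t + 1) := by
          rw [hC₂, h1β, htp]
          field_simp
          linear_combination β ^ 2 * K ^ 2 * hβ
  have hZ : ∫ ω, (X t ω - m t) ∂μ = 0 := hY0 t (by omega) htN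
  rw [expand, hV, hG, hZ, hC₁]
  linarith [hcovpart, hbiaspart]
end
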